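/- arXiv:2507.12231 — 2 statements merged into one kernel-verified Lean document; each statement's English description precedes it below -/
import Mathlib

section
/- The function Q(u) = ((√(8u+1) − 1)/2)^(2p) for p > 3/2 is convex on [0,∞): its second derivative satisfies Q''(u) ≥ ((√(8u+1)−1)/2)^(2p−2) · (8p/(8u+1)) · (2p−2) ≥ 0 for all u ≥ 0. -/
open Real Filter

private lemma stmt5_aux_ineq (p g : ℝ) (hp : 3/2 < p) (hg : 0 ≤ g) :
    g ^ (2*p-2) * (8*p/(2*g+1)^2) * (2*p-2) ≤
      8*p*((2*p-1) * g ^ (2*p-2) - 2 * g ^ (2*p-1) / (2*g+1)) / (2*g+1)^2 := by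
  have hs0 : (0:ℝ) < 2*g+1 := by linarith
  have hG2 : 0 ≤ g ^ (2*p-2) := Real.rpow_nonneg hg _
  have hG1 : g ^ (2*p-1) = g ^ (2*p-2) * g := by
    rcases eq_or_lt_of_le hg with h | h
    · rw [← h, Real.zero_rpow (by linarith), Real.zero_rpow (by linarith)]
      ring
    · rw [show 2*p-1 = (2*p-2)+1 by ring, Real.rpow_add_one (ne_of_gt h)]
  rw [hG1]
  set G2 := g ^ (2*p-2) with hG2def
  rw [show G2 * (8*p/(2*g+1)^2) * (2*p-2) = 8*p*(2*p-2)*G2 / (2*g+1)^2 by ring]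
  gcongr ?_ / _
  have key : 2 * (G2 * g) / (2*g+1) ≤ G2 := by
    rw [div_le_iff₀ hs0]; nlinarith
  have h1 : 0 ≤ 8*p*(G2 - 2 * (G2 * g) / (2*g+1)) :=
    mul_nonneg (by linarith) (by linarith)
  nlinarith [h1]

theorem stmt_5 (p : ℝ) (hp : 3/2 < p) :
    ConvexOn ℝ (Set.Ici 0)
      (fun u : ℝ => ((Real.sqrt (8*u+1) - 1)/2) ^ (2*p)) ∧
    ∀ u ≥ (0:ℝ),
      0 ≤ ((Real.sqrt (8*u+1) - 1)/2) ^ (2*p - 2) * (8*p/(8*u+1)) * (2*p - 2) ∧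
      ((Real.sqrt (8*u+1) - 1)/2) ^ (2*p - 2) * (8*p/(8*u+1)) * (2*p - 2) ≤
        deriv (deriv (fun u : ℝ => ((Real.sqrt (8*u+1) - 1)/2) ^ (2*p))) u := by
  have h2p : (1:ℝ) ≤ 2*p := by linarith
  have h2p1 : (1:ℝ) ≤ 2*p-1 := by linarith
  set Q : ℝ → ℝ := fun u => ((Real.sqrt (8*u+1) - 1)/2) ^ (2*p) with hQdef
  have hs' : ∀ u : ℝ, -1/8 < u →
      HasDerivAt (fun u : ℝ => Real.sqrt (8*u+1)) (4/Real.sqrt (8*u+1)) u := by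
    intro u hu
    have h8 : (0:ℝ) < 8*u+1 := by linarith
    have h1 : HasDerivAt (fun u:ℝ => 8*u+1) 8 u := by
      simpa using ((hasDerivAt_id u).const_mul (8:ℝ)).add_const (1:ℝ)
    have h2 := (Real.hasDerivAt_sqrt (ne_of_gt h8)).comp u h1
    refine h2.congr_deriv ?_
    have hs0 : (0:ℝ) < Real.sqrt (8*u+1) := Real.sqrt_pos.mpr h8
    field_simp
    ring
  have hg' : ∀ u : ℝ, -1/8 < u →
      HasDerivAt (fun u : ℝ => (Real.sqrt (8*u+1)-1)/2) (2/Real.sqrt (8*u+1)) u := by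
    intro u hu
    have := ((hs' u hu).sub_const 1).div_const 2
    refine this.congr_deriv ?_
    ring
  have hQ' : ∀ u : ℝ, -1/8 < u →
      HasDerivAt Q (4*p*((Real.sqrt (8*u+1)-1)/2)^(2*p-1)/Real.sqrt (8*u+1)) u := by
    intro u hu
    have := (hg' u hu).rpow_const (Or.inr h2p)
    convert this using 1
    ring
  set φ : ℝ → ℝ := fun u => 4*p*((Real.sqrt (8*u+1)-1)/2)^(2*p-1)/Real.sqrt (8*u+1) with hφdef
  have hφ' : ∀ u : ℝ, -1/8 < u →
      HasDerivAt φ (8*p*((2*p-1)*((Real.sqrt (8*u+1)-1)/2)^(2*p-2)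
        - 2*((Real.sqrt (8*u+1)-1)/2)^(2*p-1)/Real.sqrt (8*u+1))/(Real.sqrt (8*u+1)^2)) u := by
    intro u hu
    have h8 : (0:ℝ) < 8*u+1 := by linarith
    have hs0 : (0:ℝ) < Real.sqrt (8*u+1) := Real.sqrt_pos.mpr h8
    have hnum : HasDerivAt (fun u : ℝ => 4*p*((Real.sqrt (8*u+1)-1)/2)^(2*p-1))
        (4*p*((2/Real.sqrt (8*u+1))*(2*p-1)*((Real.sqrt (8*u+1)-1)/2)^(2*p-1-1))) u :=
      ((hg' u hu).rpow_const (Or.inr h2p1)).const_mul (4*p)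
    have := hnum.div (hs' u hu) (ne_of_gt hs0)
    refine this.congr_deriv ?_
    rw [show 2*p-1-1 = 2*p-2 by ring]
    field_simp
    ring
  have hdd : ∀ u : ℝ, -1/8 < u → deriv (deriv Q) u =
      8*p*((2*p-1)*((Real.sqrt (8*u+1)-1)/2)^(2*p-2)
        - 2*((Real.sqrt (8*u+1)-1)/2)^(2*p-1)/Real.sqrt (8*u+1))/(Real.sqrt (8*u+1)^2) := by
    intro u hu
    have heq : deriv Q =ᶠ[nhds u] φ := by
      filter_upwards [Ioi_mem_nhds hu] with v hv using (hQ' v hv).deriv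
    rw [heq.deriv_eq]
    exact (hφ' u hu).deriv
  have main : ∀ u : ℝ, 0 ≤ u →
      0 ≤ ((Real.sqrt (8*u+1) - 1)/2) ^ (2*p - 2) * (8*p/(8*u+1)) * (2*p - 2) ∧
      ((Real.sqrt (8*u+1) - 1)/2) ^ (2*p - 2) * (8*p/(8*u+1)) * (2*p - 2) ≤
        deriv (deriv Q) u := by
    intro u hu
    have h8 : (0:ℝ) < 8*u+1 := by linarith
    have hs1 : (1:ℝ) ≤ Real.sqrt (8*u+1) := by
      have h := Real.sqrt_le_sqrt (show (1:ℝ) ≤ 8*u+1 by linarith)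
      rwa [Real.sqrt_one] at h
    have hg0 : (0:ℝ) ≤ (Real.sqrt (8*u+1)-1)/2 := by linarith
    constructor
    · exact mul_nonneg (mul_nonneg (Real.rpow_nonneg hg0 _) (by positivity)) (by linarith)
    · rw [hdd u (by linarith)]
      set s := Real.sqrt (8*u+1) with hsdef
      set g := (s-1)/2 with hgdef
      have hsg : s = 2*g+1 := by rw [hgdef]; ring
      have h81 : 8*u+1 = (2*g+1)^2 := by
        rw [← hsg, hsdef]; exact (Real.sq_sqrt h8.le).symm
      rw [h81, hsg]
      exact stmt5_aux_ineq p g hp (by rw [hgdef]; linarith)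
  refine ⟨?_, fun u hu => main u hu⟩
  have hIci : ∀ u : ℝ, u ∈ Set.Ici (0:ℝ) → -1/8 < u := fun u hu => by
    have : (0:ℝ) ≤ u := hu
    linarith
  apply convexOn_of_deriv2_nonneg (convex_Ici 0)
  · intro u hu
    exact ((hQ' u (hIci u hu)).differentiableAt).continuousAt.continuousWithinAt
  · rw [interior_Ici]
    intro u hu
    have : (0:ℝ) < u := hu
    exact (hQ' u (by linarith)).differentiableAt.differentiableWithinAt
  · rw [interior_Ici]
    intro u hu
    have h0 : (0:ℝ) < u := hu
    have hu' : -1/8 < u := by linarith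
    have heq : deriv Q =ᶠ[nhds u] φ := by
      filter_upwards [Ioi_mem_nhds hu'] with v hv using (hQ' v hv).deriv
    exact ((hφ' u hu').differentiableAt.congr_of_eventuallyEq heq).differentiableWithinAt
  · rw [interior_Ici]
    intro u hu
    have h0 : (0:ℝ) < u := hu
    have h := main u h0.le
    show 0 ≤ deriv (deriv Q) u
    exact le_trans h.1 h.2
end

section
/- Under conditions on K (positive, even, kernel with ∫₀^∞ K = 1/2, decreasing on ℝ⁺), if B* is a bounded measurable function on ℝ⁺ with inf_{t>r} B*(t) > 0 for some r > 0, and Q(B*(x)) = ∫₀^∞ (K(x−t) − K(x+t))(B*(t) + ω₂(t,B*(t))) dt with Q(0) = 0, Q strictly increasing, and ω₂ ≥ 0, then B*(x) > 0 for all x > 0. -/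
open MeasureTheory intervalIntegral

section aux
variable (K : ℝ → ℝ)

lemma Kabs (heven : ∀ t, K (-t) = K t) (u : ℝ) : K u = K |u| := by
  rcases abs_cases u with ⟨h, _⟩ | ⟨h, _⟩
  · rw [h]
  · rw [h, heven]

lemma Kmono (heven : ∀ t, K (-t) = K t) (hanti : StrictAntiOn K (Set.Ici 0))
    {p q : ℝ} (hp : 0 ≤ p) (hpq : p ≤ q) : K q ≤ K p :=
  hanti.antitoneOn hp (le_trans hp hpq) hpq

lemma KleK0 (heven : ∀ t, K (-t) = K t) (hanti : StrictAntiOn K (Set.Ici 0))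
    (u : ℝ) : K u ≤ K 0 := by
  rw [Kabs K heven u]
  exact Kmono K heven hanti le_rfl (abs_nonneg u)

lemma Dpos (heven : ∀ t, K (-t) = K t) (hanti : StrictAntiOn K (Set.Ici 0))
    {x t : ℝ} (hx : 0 < x) (ht : 0 < t) : 0 < K (x - t) - K (x + t) := by
  have h1 : |x - t| < x + t := by
    rw [abs_lt]; constructor <;> nlinarith
  have := hanti (abs_nonneg (x - t)) (by positivity : (0:ℝ) ≤ x + t) h1
  rw [Kabs K heven (x - t)]
  linarith

lemma Dmono (heven : ∀ t, K (-t) = K t) (hanti : StrictAntiOn K (Set.Ici 0))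
    {x s t : ℝ} (hx : 0 ≤ x) (hxs : x ≤ s) (hst : s ≤ t) :
    K (x - t) - K (x + t) ≤ K (s - t) - K (s + t) := by
  have h1 : K (x - t) ≤ K (s - t) := by
    rw [show x - t = -(t - x) by ring, heven, show s - t = -(t - s) by ring, heven]
    exact Kmono K heven hanti (by linarith) (by linarith)
  have h2 : K (s + t) ≤ K (x + t) :=
    Kmono K heven hanti (by linarith) (by linarith)
  linarith

lemma kernel_comp
    (hpos : ∀ x, 0 < K x)
    (heven : ∀ t, K (-t) = K t)
    (hcont : Continuous K)
    (hanti : StrictAntiOn K (Set.Ici 0))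
    (r : ℝ) (hr : 0 < r) {a b : ℝ} (ha : 0 < a) (hab : a < b) (hbr : b ≤ r)
    (hba : b - a ≤ 1) :
    ∃ C₁ : ℝ, 0 < C₁ ∧ ∀ t > 0,
      (∫ x in a..b, (K (x - t) - K (x + t))) ≤
        C₁ * ∫ s in r..(r+1), (K (s - t) - K (s + t)) := by
  -- compactness minimum
  set killer : ℝ × ℝ → ℝ := fun p => K (p.1 - p.2) - K (p.1 + p.2) with hkdef
  have hkc : Continuous killer :=
    (hcont.comp (continuous_fst.sub continuous_snd)).sub
      (hcont.comp (continuous_fst.add continuous_snd))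
  have hcpt : IsCompact (Set.Icc r (r+1) ×ˢ Set.Icc (1/4:ℝ) (r+1)) :=
    isCompact_Icc.prod isCompact_Icc
  have hne : (Set.Icc r (r+1) ×ˢ Set.Icc (1/4:ℝ) (r+1)).Nonempty :=
    ⟨(r, r+1), by constructor <;> constructor <;> simp <;> linarith⟩
  obtain ⟨m, hm, hmin'⟩ := hcpt.exists_isMinOn hne hkc.continuousOn
  have hmin : ∀ p ∈ Set.Icc r (r+1) ×ˢ Set.Icc (1/4:ℝ) (r+1), killer m ≤ killer p := hmin'
  set ε₀ : ℝ := killer m with he0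
  have hm1 : r ≤ m.1 ∧ m.1 ≤ r + 1 := ⟨hm.1.1, hm.1.2⟩
  have hm2 : 1/4 ≤ m.2 ∧ m.2 ≤ r + 1 := ⟨hm.2.1, hm.2.2⟩
  have hε₀ : 0 < ε₀ :=
    Dpos K heven hanti (by linarith [hm1.1]) (by linarith [hm2.1])
  set κ : ℝ := K (r + 1/4) - K (r + 3/4) with hκdef
  have hκ : 0 < κ := by
    have h := hanti (Set.mem_Ici.mpr (by linarith : (0:ℝ) ≤ r + 1/4))
      (Set.mem_Ici.mpr (by linarith : (0:ℝ) ≤ r + 3/4)) (by linarith)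
    rw [hκdef]; linarith
  have hK0 : 0 < K 0 := hpos 0
  refine ⟨max (K 0 / κ) (max (K 0 / ε₀) 1), by positivity, ?_⟩
  intro t ht
  have hKI : ∀ p q : ℝ, IntervalIntegrable K volume p q := fun p q =>
    hcont.intervalIntegrable p q
  have hcsub : ∀ c : ℝ, Continuous (fun x : ℝ => K (x - c)) := fun c =>
    hcont.comp (continuous_id.sub continuous_const)
  have hcadd : ∀ c : ℝ, Continuous (fun x : ℝ => K (x + c)) := fun c =>
    hcont.comp (continuous_id.add continuous_const)
  have hD1 : ∀ c p q : ℝ, IntervalIntegrable (fun x : ℝ => K (x - c)) volume p q :=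
    fun c p q => (hcsub c).intervalIntegrable p q
  have hD2 : ∀ c p q : ℝ, IntervalIntegrable (fun x : ℝ => K (x + c)) volume p q :=
    fun c p q => (hcadd c).intervalIntegrable p q
  have hDI : ∀ c p q : ℝ, IntervalIntegrable (fun x : ℝ => K (x - c) - K (x + c)) volume p q :=
    fun c p q => ((hcsub c).sub (hcadd c)).intervalIntegrable p q
  have hRHSnn : 0 ≤ ∫ s in r..(r+1), (K (s - t) - K (s + t)) := by
    apply intervalIntegral.integral_nonneg (by linarith)
    intro s hs
    exact le_of_lt (Dpos K heven hanti (by linarith [hs.1]) ht)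
  set RHS := ∫ s in r..(r+1), (K (s - t) - K (s + t)) with hRHSdef
  rcases le_or_gt t (1/4) with hts | hts
  · -- small t
    have hLr : (∫ x in a..b, (K (x - t) - K (x + t))) =
        (∫ u in (a-t)..(a+t), K u) - ∫ u in (b-t)..(b+t), K u := by
      rw [intervalIntegral.integral_sub (hD1 t _ _) (hD2 t _ _)]
      rw [intervalIntegral.integral_comp_sub_right K t, intervalIntegral.integral_comp_add_right K t]
      have h1 : (∫ u in (a-t)..(b-t), K u) + ∫ u in (b-t)..(b+t), K u = ∫ u in (a-t)..(b+t), K u :=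
        intervalIntegral.integral_add_adjacent_intervals (hKI _ _) (hKI _ _)
      have h2 : (∫ u in (a-t)..(a+t), K u) + ∫ u in (a+t)..(b+t), K u = ∫ u in (a-t)..(b+t), K u :=
        intervalIntegral.integral_add_adjacent_intervals (hKI _ _) (hKI _ _)
      linarith
    have hRr : RHS =
        (∫ u in (r-t)..(r+t), K u) - ∫ u in (r+1-t)..(r+1+t), K u := by
      rw [hRHSdef]
      rw [intervalIntegral.integral_sub (hD1 t _ _) (hD2 t _ _)]
      rw [intervalIntegral.integral_comp_sub_right K t, intervalIntegral.integral_comp_add_right K t]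
      have h1 : (∫ u in (r-t)..(r+1-t), K u) + ∫ u in (r+1-t)..(r+1+t), K u = ∫ u in (r-t)..(r+1+t), K u :=
        intervalIntegral.integral_add_adjacent_intervals (hKI _ _) (hKI _ _)
      have h2 : (∫ u in (r-t)..(r+t), K u) + ∫ u in (r+t)..(r+1+t), K u = ∫ u in (r-t)..(r+1+t), K u :=
        intervalIntegral.integral_add_adjacent_intervals (hKI _ _) (hKI _ _)
      have h3 : (∫ u in (r+1-t)..(r+t), K u) + ∫ u in (r+t)..(r+1+t), K u = ∫ u in (r+1-t)..(r+1+t), K u :=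
        intervalIntegral.integral_add_adjacent_intervals (hKI _ _) (hKI _ _)
      linarith
    have hL1 : (∫ u in (a-t)..(a+t), K u) ≤ 2 * t * K 0 := by
      calc (∫ u in (a-t)..(a+t), K u) ≤ ∫ _u in (a-t)..(a+t), K 0 :=
            intervalIntegral.integral_mono_on (by linarith) (hKI _ _)
              (intervalIntegrable_const) (fun u _ => KleK0 K heven hanti u)
        _ = 2 * t * K 0 := by rw [intervalIntegral.integral_const, smul_eq_mul]; ring
    have hL2 : 0 ≤ ∫ u in (b-t)..(b+t), K u :=
      intervalIntegral.integral_nonneg (by linarith) (fun u _ => (hpos u).le)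
    have hR1 : 2 * t * K (r + t) ≤ ∫ u in (r-t)..(r+t), K u := by
      calc (2 * t * K (r+t)) = ∫ _u in (r-t)..(r+t), K (r+t) := by
            rw [intervalIntegral.integral_const, smul_eq_mul]; ring
        _ ≤ ∫ u in (r-t)..(r+t), K u := by
            apply intervalIntegral.integral_mono_on (by linarith) intervalIntegrable_const (hKI _ _)
            intro u hu
            rw [Kabs K heven u]
            exact Kmono K heven hanti (abs_nonneg u) (abs_le.mpr ⟨by linarith [hu.1], by linarith [hu.2]⟩)
    have hR2 : (∫ u in (r+1-t)..(r+1+t), K u) ≤ 2 * t * K (r + 1 - t) := by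
      calc (∫ u in (r+1-t)..(r+1+t), K u) ≤ ∫ _u in (r+1-t)..(r+1+t), K (r+1-t) := by
            apply intervalIntegral.integral_mono_on (by linarith) (hKI _ _) intervalIntegrable_const
            intro u hu
            exact Kmono K heven hanti (by linarith [hu.1]) (hu.1)
        _ = 2 * t * K (r + 1 - t) := by rw [intervalIntegral.integral_const, smul_eq_mul]; ring
    have hκt : 2 * t * κ ≤ RHS := by
      have e1 : K (r + 1/4) ≤ K (r + t) := Kmono K heven hanti (by linarith) (by linarith)
      have e2 : K (r + 1 - t) ≤ K (r + 3/4) := Kmono K heven hanti (by linarith) (by linarith)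
      rw [hRr]; rw [hκdef]; nlinarith
    have hLHS : (∫ x in a..b, (K (x - t) - K (x + t))) ≤ 2 * t * K 0 := by
      rw [hLr]; linarith
    have step : 2 * t * K 0 ≤ (K 0 / κ) * RHS := by
      have : (K 0 / κ) * (2 * t * κ) = 2 * t * K 0 := by field_simp
      nlinarith [mul_le_mul_of_nonneg_left hκt (le_of_lt (div_pos hK0 hκ))]
    calc (∫ x in a..b, (K (x - t) - K (x + t))) ≤ (K 0 / κ) * RHS := le_trans hLHS step
      _ ≤ max (K 0 / κ) (max (K 0 / ε₀) 1) * RHS :=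
          mul_le_mul_of_nonneg_right (le_max_left _ _) hRHSnn
  rcases lt_or_ge t (r+1) with htm | htm
  · -- middle t
    have hLHS : (∫ x in a..b, (K (x - t) - K (x + t))) ≤ K 0 := by
      calc (∫ x in a..b, (K (x - t) - K (x + t))) ≤ ∫ _x in a..b, K 0 := by
            apply intervalIntegral.integral_mono_on (le_of_lt hab) (hDI t a b) intervalIntegrable_const
            intro x _
            have := hpos (x + t)
            have := KleK0 K heven hanti (x - t)
            linarith
        _ = (b - a) * K 0 := by rw [intervalIntegral.integral_const, smul_eq_mul]
        _ ≤ K 0 := by nlinarith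
    have hRHS : ε₀ ≤ RHS := by
      calc ε₀ = ∫ _s in r..(r+1), ε₀ := by rw [intervalIntegral.integral_const, smul_eq_mul]; ring
        _ ≤ RHS := by
            apply intervalIntegral.integral_mono_on (by linarith) intervalIntegrable_const (hDI t r (r+1))
            intro s hs
            exact hmin (s, t) ⟨⟨hs.1, hs.2⟩, ⟨le_of_lt hts, le_of_lt htm⟩⟩
    have step : K 0 ≤ (K 0 / ε₀) * RHS := by
      have : (K 0 / ε₀) * ε₀ = K 0 := by field_simp
      nlinarith [mul_le_mul_of_nonneg_left hRHS (le_of_lt (div_pos hK0 hε₀))]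
    calc (∫ x in a..b, (K (x - t) - K (x + t))) ≤ (K 0 / ε₀) * RHS := le_trans hLHS step
      _ ≤ max (K 0 / κ) (max (K 0 / ε₀) 1) * RHS := by
          apply mul_le_mul_of_nonneg_right _ hRHSnn
          exact le_trans (le_max_left _ _) (le_max_right _ _)
  · -- large t
    have hptw : ∀ x ∈ Set.Icc a b, K (x - t) - K (x + t) ≤ RHS := by
      intro x hx
      calc K (x - t) - K (x + t) = ∫ _s in r..(r+1), (K (x - t) - K (x + t)) := by
            rw [intervalIntegral.integral_const, smul_eq_mul]; ring
        _ ≤ RHS := by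
            apply intervalIntegral.integral_mono_on (by linarith) intervalIntegrable_const (hDI t r (r+1))
            intro s hs
            exact Dmono K heven hanti (by linarith [hx.1]) (by linarith [hx.2, hs.1]) (by linarith [hs.2])
    have hLHS : (∫ x in a..b, (K (x - t) - K (x + t))) ≤ (b - a) * RHS := by
      calc (∫ x in a..b, (K (x - t) - K (x + t))) ≤ ∫ _x in a..b, RHS :=
            intervalIntegral.integral_mono_on (le_of_lt hab) (hDI t a b) intervalIntegrable_const hptw
        _ = (b - a) * RHS := by rw [intervalIntegral.integral_const, smul_eq_mul]
    calc (∫ x in a..b, (K (x - t) - K (x + t))) ≤ (b - a) * RHS := hLHS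
      _ ≤ 1 * RHS := mul_le_mul_of_nonneg_right hba hRHSnn
      _ ≤ max (K 0 / κ) (max (K 0 / ε₀) 1) * RHS := by
          apply mul_le_mul_of_nonneg_right _ hRHSnn
          exact le_trans (le_max_right _ _) (le_max_right _ _)

end aux

open Filter Topology ENNReal

theorem stmt_15 (K : ℝ → ℝ)
    (hpos : ∀ x, 0 < K x)
    (heven : ∀ t, K (-t) = K t)
    (hcont : Continuous K)
    (hanti : StrictAntiOn K (Set.Ici 0))
    (hKint : Integrable K)
    (hhalf : ∫ t in Set.Ioi (0:ℝ), K t = 1/2)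
    (Q : ℝ → ℝ) (hQ0 : Q 0 = 0) (hQmono : StrictMonoOn Q (Set.Ici 0))
    (ω₂ : ℝ → ℝ → ℝ) (hω : ∀ t ≥ (0:ℝ), ∀ u ≥ (0:ℝ), 0 ≤ ω₂ t u)
    (B : ℝ → ℝ) (hBnn : ∀ x ≥ (0:ℝ), 0 ≤ B x)
    (hBbd : ∃ C, ∀ x ≥ (0:ℝ), B x ≤ C)
    (r : ℝ) (hr : 0 < r)
    (hinf : ∃ c > (0:ℝ), ∀ t > r, c ≤ B t)
    (heq : ∀ x ≥ (0:ℝ),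
      Q (B x) = ∫ t in Set.Ioi (0:ℝ),
        (K (x - t) - K (x + t)) * (B t + ω₂ t (B t))) :
    ∀ x > (0:ℝ), 0 < B x := by
  classical
  obtain ⟨c, hc, hcB⟩ := hinf
  obtain ⟨C, hC⟩ := hBbd
  set ρ : Measure ℝ := volume.restrict (Set.Ioi 0) with hρdef
  set h : ℝ → ℝ := fun t => B t + ω₂ t (B t) with hhdef
  set f : ℝ → ℝ → ℝ := fun x t => (K (x - t) - K (x + t)) * h t with hfdef
  have hfeq : ∀ x ≥ (0:ℝ), Q (B x) = ∫ t, f x t ∂ρ := heq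
  have hCpos : 0 < C :=
    lt_of_lt_of_le hc (le_trans (hcB (r+1) (by linarith)) (hC (r+1) (by linarith)))
  have hhnn : ∀ t, 0 < t → 0 ≤ h t := fun t ht =>
    add_nonneg (hBnn t ht.le) (hω t ht.le _ (hBnn t ht.le))
  have hfnn : ∀ x, 0 < x → ∀ t ∈ Set.Ioi (0:ℝ), 0 ≤ f x t := fun x hx t ht =>
    mul_nonneg (Dpos K heven hanti hx ht).le (hhnn t ht)
  have hfnn_ae : ∀ x, 0 < x → 0 ≤ᵐ[ρ] f x := fun x hx =>
    (ae_restrict_iff' measurableSet_Ioi).2 (ae_of_all _ (hfnn x hx))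
  set M : ℝ := Q C with hMdef
  have hQle : ∀ x ≥ (0:ℝ), Q (B x) ≤ M := fun x hx =>
    hQmono.monotoneOn (Set.mem_Ici.mpr (hBnn x hx)) (Set.mem_Ici.mpr hCpos.le) (hC x hx)
  have hQpos : ∀ x, r < x → 0 < Q (B x) := by
    intro x hx
    have hBx : 0 < B x := lt_of_lt_of_le hc (hcB x hx)
    have := hQmono (Set.mem_Ici.mpr le_rfl) (Set.mem_Ici.mpr hBx.le) hBx
    rwa [hQ0] at this
  have hInt : ∀ x, r < x → Integrable (f x) ρ := by
    intro x hx
    by_contra hni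
    have h0 : (∫ t, f x t ∂ρ) = 0 := integral_undef hni
    have := hfeq x (by linarith)
    rw [h0] at this
    exact absurd this (ne_of_gt (hQpos x hx))
  -- measurability of h on ρ
  have hmeas_h : AEMeasurable h ρ := by
    have h1 : AEMeasurable (f (r+1)) ρ := (hInt (r+1) (by linarith)).aemeasurable
    have h2 : Measurable (fun t : ℝ => K (r+1 - t) - K (r+1 + t)) :=
      ((hcont.comp (continuous_const.sub continuous_id)).sub
        (hcont.comp (continuous_const.add continuous_id))).measurable
    refine (h1.div h2.aemeasurable).congr ?_
    refine (ae_restrict_iff' measurableSet_Ioi).2 (ae_of_all _ ?_)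
    intro t ht
    have hD : K (r+1 - t) - K (r+1 + t) ≠ 0 :=
      ne_of_gt (Dpos K heven hanti (by linarith) ht)
    simp only [hfdef, Pi.div_apply]
    rw [mul_comm, mul_div_assoc, div_self hD, mul_one]
  set h' : ℝ → ℝ := fun t => max (hmeas_h.mk h t) 0 with hh'def
  have hh'meas : Measurable h' := hmeas_h.measurable_mk.max measurable_const
  have hh'nn : ∀ t, 0 ≤ h' t := fun t => le_max_right _ _
  have hh'ae : h =ᵐ[ρ] h' := by
    have h2 : ∀ᵐ t ∂ρ, 0 ≤ h t :=
      (ae_restrict_iff' measurableSet_Ioi).2 (ae_of_all _ hhnn)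
    filter_upwards [hmeas_h.ae_eq_mk, h2] with t h1 h2
    simp only [hh'def]
    rw [← h1]; exact (max_eq_left h2).symm
  set F : ℝ → ℝ → ℝ≥0∞ := fun x t => ENNReal.ofReal (K (x - t) - K (x + t)) * ENNReal.ofReal (h' t)
    with hFdef
  have hFmeas : ∀ x, Measurable (F x) := by
    intro x
    refine Measurable.mul (f := fun t => ENNReal.ofReal (K (x - t) - K (x + t))) (g := fun t => ENNReal.ofReal (h' t)) ?_ ?_
    · exact (ENNReal.continuous_ofReal.comp ((hcont.comp (continuous_const.sub continuous_id)).sub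
        (hcont.comp (continuous_const.add continuous_id)))).measurable
    · exact ENNReal.measurable_ofReal.comp hh'meas
  have hFjoint : Measurable (Function.uncurry F) := by
    refine Measurable.mul (f := fun p : ℝ × ℝ => ENNReal.ofReal (K (p.1 - p.2) - K (p.1 + p.2))) (g := fun p : ℝ × ℝ => ENNReal.ofReal (h' p.2)) ?_ ?_
    · exact (ENNReal.continuous_ofReal.comp ((hcont.comp (continuous_fst.sub continuous_snd)).sub
        (hcont.comp (continuous_fst.add continuous_snd)))).measurable
    · exact (ENNReal.measurable_ofReal.comp hh'meas).comp measurable_snd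
  set L : ℝ → ℝ≥0∞ := fun x => ∫⁻ t, F x t ∂ρ with hLdef
  have hLof : ∀ x, 0 < x → L x = ∫⁻ t, ENNReal.ofReal (f x t) ∂ρ := by
    intro x hx
    apply lintegral_congr_ae
    have h2 : ∀ᵐ t ∂ρ, t ∈ Set.Ioi (0:ℝ) :=
      (ae_restrict_iff' measurableSet_Ioi).2 (ae_of_all _ fun t ht => ht)
    filter_upwards [hh'ae, h2] with t h1 h2
    simp only [hFdef, hfdef]
    rw [← h1, ← ENNReal.ofReal_mul (Dpos K heven hanti hx h2).le]
  have hLval : ∀ x, r < x → L x = ENNReal.ofReal (Q (B x)) := by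
    intro x hx
    rw [hLof x (by linarith), ← ofReal_integral_eq_lintegral_ofReal (hInt x hx)
      (hfnn_ae x (by linarith)), hfeq x (by linarith)]
  have hLleM : ∀ x, r < x → L x ≤ ENNReal.ofReal M := by
    intro x hx
    rw [hLval x hx]
    exact ENNReal.ofReal_le_ofReal (hQle x (by linarith))
  have hIntOfFin : ∀ x, 0 < x → L x ≠ ⊤ → Integrable (f x) ρ := by
    intro x hx hfin
    constructor
    · have : AEMeasurable (f x) ρ := by
        apply AEMeasurable.mul _ hmeas_h
        exact (((hcont.comp (continuous_const.sub continuous_id)).sub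
          (hcont.comp (continuous_const.add continuous_id)))).measurable.aemeasurable
      exact this.aestronglyMeasurable
    · rw [hasFiniteIntegral_iff_ofReal (hfnn_ae x hx)]
      rw [hLof x hx] at hfin
      exact lt_top_iff_ne_top.mpr hfin
  -- density of integrability points
  have hdense : ∀ a b : ℝ, 0 < a → a < b → b ≤ r → b - a ≤ 1 →
      ∃ s, s ∈ Set.Ioo a b ∧ L s ≤ ENNReal.ofReal M := by
    intro a b ha hab hbr hba
    by_contra hcon
    push_neg at hcon
    have htop : ∀ s ∈ Set.Ioo a b, L s = ⊤ := by
      intro s hs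
      by_contra hne
      have hsp : 0 < s := lt_trans ha hs.1
      have hI := hIntOfFin s hsp hne
      have hLs : L s = ENNReal.ofReal (Q (B s)) := by
        rw [hLof s hsp, ← ofReal_integral_eq_lintegral_ofReal hI (hfnn_ae s hsp),
          hfeq s hsp.le]
      have hle : L s ≤ ENNReal.ofReal M := by
        rw [hLs]; exact ENNReal.ofReal_le_ofReal (hQle s hsp.le)
      exact absurd hle (not_le.mpr (hcon s hs))
    obtain ⟨C₁, hC₁, hker⟩ := kernel_comp K hpos heven hcont hanti r hr ha hab hbr hba
    have hswap1 := lintegral_lintegral_swap (μ := volume.restrict (Set.Ioo a b)) (ν := ρ)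
      hFjoint.aemeasurable
    have hswap2 := lintegral_lintegral_swap (μ := volume.restrict (Set.Ioo r (r+1))) (ν := ρ)
      hFjoint.aemeasurable
    have hLHS : (∫⁻ x in Set.Ioo a b, L x) = ⊤ := by
      rw [setLIntegral_congr_fun measurableSet_Ioo (fun x hx => htop x hx),
        setLIntegral_const, Real.volume_Ioo]
      exact ENNReal.top_mul (by rw [Ne, ENNReal.ofReal_eq_zero]; push_neg; linarith)
    have hDmeasx : ∀ t : ℝ, Measurable fun x : ℝ => ENNReal.ofReal (K (x - t) - K (x + t)) :=
      fun t => (ENNReal.continuous_ofReal.comp ((hcont.comp (continuous_id.sub continuous_const)).sub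
        (hcont.comp (continuous_id.add continuous_const)))).measurable
    have hDInt : ∀ t : ℝ, ∀ p q : ℝ, IntegrableOn (fun x : ℝ => K (x - t) - K (x + t)) (Set.Ioo p q) volume :=
      fun t p q => (((hcont.comp (continuous_id.sub continuous_const)).sub
        (hcont.comp (continuous_id.add continuous_const))).integrableOn_Icc).mono_set
          Set.Ioo_subset_Icc_self
    have hΦbound : ∀ t ∈ Set.Ioi (0:ℝ),
        (∫⁻ x in Set.Ioo a b, ENNReal.ofReal (K (x - t) - K (x + t))) ≤
          ENNReal.ofReal C₁ * ∫⁻ s in Set.Ioo r (r+1), ENNReal.ofReal (K (s - t) - K (s + t)) := by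
      intro t ht
      have ht' : (0:ℝ) < t := ht
      have hnna : 0 ≤ᵐ[volume.restrict (Set.Ioo a b)] fun x => K (x - t) - K (x + t) :=
        (ae_restrict_iff' measurableSet_Ioo).2 (ae_of_all _ fun x hx =>
          (Dpos K heven hanti (lt_trans ha hx.1) ht').le)
      have hnnr : 0 ≤ᵐ[volume.restrict (Set.Ioo r (r+1))] fun s => K (s - t) - K (s + t) :=
        (ae_restrict_iff' measurableSet_Ioo).2 (ae_of_all _ fun s hs =>
          (Dpos K heven hanti (lt_trans hr hs.1) ht').le)
      rw [← ofReal_integral_eq_lintegral_ofReal (hDInt t a b) hnna,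
        ← ofReal_integral_eq_lintegral_ofReal (hDInt t r (r+1)) hnnr,
        ← ENNReal.ofReal_mul hC₁.le]
      apply ENNReal.ofReal_le_ofReal
      have e1 : (∫ x in Set.Ioo a b, (K (x - t) - K (x + t))) =
          ∫ x in a..b, (K (x - t) - K (x + t)) := by
        rw [intervalIntegral.integral_of_le hab.le, integral_Ioc_eq_integral_Ioo]
      have e2 : (∫ s in Set.Ioo r (r+1), (K (s - t) - K (s + t))) =
          ∫ s in r..(r+1), (K (s - t) - K (s + t)) := by
        rw [intervalIntegral.integral_of_le (by linarith), integral_Ioc_eq_integral_Ioo]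
      rw [e1, e2]
      exact hker t ht'
    have hmain : (∫⁻ t, (∫⁻ x in Set.Ioo a b, F x t) ∂ρ) ≤
        ENNReal.ofReal C₁ * ∫⁻ t, (∫⁻ s in Set.Ioo r (r+1), F s t) ∂ρ := by
      rw [← lintegral_const_mul' _ _ ENNReal.ofReal_ne_top]
      apply lintegral_mono_ae
      refine (ae_restrict_iff' measurableSet_Ioi).2 (ae_of_all _ ?_)
      intro t ht
      have e1 : (∫⁻ x in Set.Ioo a b, F x t) =
          (∫⁻ x in Set.Ioo a b, ENNReal.ofReal (K (x - t) - K (x + t))) * ENNReal.ofReal (h' t) :=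
        lintegral_mul_const _ (hDmeasx t)
      have e2 : (∫⁻ s in Set.Ioo r (r+1), F s t) =
          (∫⁻ s in Set.Ioo r (r+1), ENNReal.ofReal (K (s - t) - K (s + t))) * ENNReal.ofReal (h' t) :=
        lintegral_mul_const _ (hDmeasx t)
      rw [e1, e2, ← mul_assoc]
      exact mul_le_mul_left (hΦbound t ht) _
    have hub : (∫⁻ s in Set.Ioo r (r+1), L s) ≤ ENNReal.ofReal M * 1 := by
      calc (∫⁻ s in Set.Ioo r (r+1), L s) ≤ ∫⁻ _s in Set.Ioo r (r+1), ENNReal.ofReal M :=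
            setLIntegral_mono measurable_const fun s hs => hLleM s hs.1
        _ = ENNReal.ofReal M * volume (Set.Ioo r (r+1)) := setLIntegral_const _ _
        _ = ENNReal.ofReal M * 1 := by
            rw [Real.volume_Ioo]
            norm_num
    have hfinal : (⊤:ℝ≥0∞) ≤ ENNReal.ofReal C₁ * (ENNReal.ofReal M * 1) := by
      calc (⊤:ℝ≥0∞) = ∫⁻ x in Set.Ioo a b, L x := hLHS.symm
        _ = ∫⁻ t, (∫⁻ x in Set.Ioo a b, F x t) ∂ρ := hswap1
        _ ≤ ENNReal.ofReal C₁ * ∫⁻ t, (∫⁻ s in Set.Ioo r (r+1), F s t) ∂ρ := hmain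
        _ = ENNReal.ofReal C₁ * ∫⁻ s in Set.Ioo r (r+1), L s := by rw [← hswap2]
        _ ≤ ENNReal.ofReal C₁ * (ENNReal.ofReal M * 1) := mul_le_mul_right hub _
    exact (ENNReal.mul_ne_top ENNReal.ofReal_ne_top
      (ENNReal.mul_ne_top ENNReal.ofReal_ne_top ENNReal.one_ne_top)) (top_le_iff.mp hfinal)
  -- conclusion
  intro x₀ hx₀
  rcases lt_or_ge r x₀ with hxr | hxr
  · exact lt_of_lt_of_le hc (hcB x₀ hxr)
  have hseq : ∃ s : ℕ → ℝ, (∀ n, x₀ < s n ∧ L (s n) ≤ ENNReal.ofReal M) ∧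
      Tendsto s atTop (𝓝 x₀) := by
    rcases eq_or_lt_of_le hxr with hxe | hxl
    · refine ⟨fun n => x₀ + 1/(n+1), fun n => ⟨by
        have h0 : (0:ℝ) < 1/((n:ℝ)+1) := by positivity
        linarith, ?_⟩, ?_⟩
      · apply hLleM
        rw [← hxe]
        have : (0:ℝ) < 1/(n+1) := by positivity
        linarith
      · have : Tendsto (fun n : ℕ => x₀ + 1/(n+1)) atTop (𝓝 (x₀ + 0)) :=
          tendsto_const_nhds.add tendsto_one_div_add_atTop_nhds_zero_nat
        simpa using this
    · have pick : ∀ n : ℕ, ∃ s, s ∈ Set.Ioo x₀ (min (x₀ + 1/(n+1)) r) ∧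
          L s ≤ ENNReal.ofReal M := by
        intro n
        apply hdense
        · exact hx₀
        · refine lt_min ?_ hxl
          have h0 : (0:ℝ) < 1/((n:ℝ)+1) := by positivity
          linarith
        · exact min_le_right _ _
        · have h1 : min (x₀ + 1/(n+1)) r ≤ x₀ + 1/(n+1) := min_le_left _ _
          have h2 : (1:ℝ)/(n+1) ≤ 1 := by
            rw [div_le_one (by positivity)]
            have : (0:ℝ) ≤ (n:ℝ) := Nat.cast_nonneg n
            linarith
          linarith
      choose s hs hsL using pick
      refine ⟨s, fun n => ⟨(hs n).1, hsL n⟩, ?_⟩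
      have hup : Tendsto (fun n : ℕ => x₀ + 1/(n+1)) atTop (𝓝 x₀) := by
        have : Tendsto (fun n : ℕ => x₀ + 1/(n+1)) atTop (𝓝 (x₀ + 0)) :=
          tendsto_const_nhds.add tendsto_one_div_add_atTop_nhds_zero_nat
        simpa using this
      refine tendsto_of_tendsto_of_tendsto_of_le_of_le tendsto_const_nhds hup
        (fun n => (hs n).1.le) (fun n => le_trans (hs n).2.le (min_le_left _ _))
  obtain ⟨s, hsp, hst⟩ := hseq
  have hLx₀ : L x₀ ≤ ENNReal.ofReal M := by
    have hptw : ∀ t : ℝ, F x₀ t = liminf (fun n => F (s n) t) atTop := by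
      intro t
      have htend : Tendsto (fun n => F (s n) t) atTop (𝓝 (F x₀ t)) := by
        have h1 : Tendsto (fun n => K (s n - t) - K (s n + t)) atTop
            (𝓝 (K (x₀ - t) - K (x₀ + t))) :=
          ((hcont.tendsto _).comp (hst.sub tendsto_const_nhds)).sub
            ((hcont.tendsto _).comp (hst.add tendsto_const_nhds))
        exact ENNReal.Tendsto.mul_const ((ENNReal.continuous_ofReal.tendsto _).comp h1)
          (Or.inr ENNReal.ofReal_ne_top)
      exact htend.liminf_eq.symm
    calc L x₀ = ∫⁻ t, liminf (fun n => F (s n) t) atTop ∂ρ :=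
          lintegral_congr fun t => hptw t
      _ ≤ liminf (fun n => L (s n)) atTop := lintegral_liminf_le fun n => hFmeas (s n)
      _ ≤ ENNReal.ofReal M := by
          refine le_trans (liminf_le_liminf (Eventually.of_forall fun n => (hsp n).2)) ?_
          rw [liminf_const]
  have hIx₀ : Integrable (f x₀) ρ :=
    hIntOfFin x₀ hx₀ (ne_top_of_le_ne_top ENNReal.ofReal_ne_top hLx₀)
  -- positivity of the integral
  set E := Set.Ioc (r+1) (r+2) with hEdef
  have hEsub : E ⊆ Set.Ioi (0:ℝ) := fun t ht => lt_trans (by linarith) ht.1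
  have hIOn : IntegrableOn (f x₀) (Set.Ioi 0) volume := by
    rw [hρdef] at hIx₀; exact hIx₀
  have hIE : IntegrableOn (f x₀) E volume := hIOn.mono_set hEsub
  have hcD : Continuous (fun t : ℝ => K (x₀ - t) - K (x₀ + t)) :=
    (hcont.comp (continuous_const.sub continuous_id)).sub
      (hcont.comp (continuous_const.add continuous_id))
  have hIcD : IntegrableOn (fun t => c * (K (x₀ - t) - K (x₀ + t))) E volume :=
    ((continuous_const.mul hcD).integrableOn_Icc).mono_set Set.Ioc_subset_Icc_self
  obtain ⟨m₁, hm₁, hmin₁'⟩ := (isCompact_Icc (a := r+1) (b := r+2)).exists_isMinOn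
    ⟨r+1, le_refl _, by linarith⟩ hcD.continuousOn
  have hmin₁ : ∀ t ∈ Set.Icc (r+1) (r+2), K (x₀ - m₁) - K (x₀ + m₁) ≤ K (x₀ - t) - K (x₀ + t) :=
    hmin₁'
  set ε₁ : ℝ := K (x₀ - m₁) - K (x₀ + m₁) with hε₁def
  have hε₁ : 0 < ε₁ := Dpos K heven hanti hx₀ (by linarith [hm₁.1])
  have s3 : 0 < ∫ t in E, c * (K (x₀ - t) - K (x₀ + t)) := by
    have hmono : (∫ t in E, c * ε₁) ≤ ∫ t in E, c * (K (x₀ - t) - K (x₀ + t)) := by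
      apply setIntegral_mono_on ((integrableOn_const_iff (C := c * ε₁)).mpr (Or.inr ?_)) hIcD measurableSet_Ioc
      · intro t ht
        exact mul_le_mul_of_nonneg_left (hmin₁ t ⟨ht.1.le, ht.2⟩) hc.le
      · rw [hEdef, Real.volume_Ioc]
        exact ENNReal.ofReal_lt_top
    have e : (∫ t in E, c * ε₁) = c * ε₁ := by
      rw [setIntegral_const, hEdef, Real.volume_real_Ioc]
      norm_num
    have : 0 < c * ε₁ := mul_pos hc hε₁
    linarith
  have s2 : (∫ t in E, c * (K (x₀ - t) - K (x₀ + t))) ≤ ∫ t in E, f x₀ t := by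
    apply setIntegral_mono_on hIcD hIE measurableSet_Ioc
    intro t ht
    have htp : (0:ℝ) < t := lt_trans (by linarith) ht.1
    have hD0 : 0 ≤ K (x₀ - t) - K (x₀ + t) := (Dpos K heven hanti hx₀ htp).le
    have hht : c ≤ h t := by
      have h1 : c ≤ B t := hcB t (by linarith [ht.1])
      have h2 : 0 ≤ ω₂ t (B t) := hω t htp.le _ (hBnn t htp.le)
      simp only [hhdef]
      linarith
    simp only [hfdef]
    nlinarith
  have s1 : (∫ t in E, f x₀ t) ≤ ∫ t in Set.Ioi (0:ℝ), f x₀ t := by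
    apply setIntegral_mono_set hIOn _ (HasSubset.Subset.eventuallyLE hEsub)
    have := hfnn_ae x₀ hx₀
    rwa [hρdef] at this
  have hQBpos : 0 < Q (B x₀) := by
    rw [hfeq x₀ hx₀.le]
    calc (0:ℝ) < ∫ t in E, c * (K (x₀ - t) - K (x₀ + t)) := s3
      _ ≤ ∫ t in E, f x₀ t := s2
      _ ≤ ∫ t, f x₀ t ∂ρ := by rw [hρdef]; exact s1
  rcases lt_or_eq_of_le (hBnn x₀ hx₀.le) with hBp | hBp
  · exact hBp
  · exfalso
    rw [← hBp, hQ0] at hQBpos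
    exact lt_irrefl 0 hQBpos
end
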